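/- arXiv:1106.0267 — 3 statements merged into one kernel-verified Lean document; each statement's English description precedes it below -/
import Mathlib

section
/- Let F : ℝ → (0,∞) be a strictly increasing continuous bijection of ℝ onto (0,∞). Suppose that for every p ∈ (0,1] there exists a real number x(p) such that p·F(x) = F(x − x(p)) for all x ∈ ℝ. Then there exist m > 0 and c ∈ ℝ such that F(x) = exp(m·(x − c)) for all x ∈ ℝ. -/
/-- Classification of the "pure" Poisson intensities invariant under thinning,
stated via the cumulative function `F`: a strictly increasing continuous bijection
of `ℝ` onto `(0,∞)` such that for every `p ∈ (0,1]` there is a shift `x(p)` with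
`p * F x = F (x - x p)` for all `x`, must be of the form `F x = exp (m * (x - c))`. -/
theorem pure_poisson_thinning_invariant_classification
    (F : ℝ → ℝ) (hmono : StrictMono F) (hcont : Continuous F)
    (hpos : ∀ x, 0 < F x)
    (hsurj : ∀ y : ℝ, 0 < y → ∃ x : ℝ, F x = y)
    (hinv : ∀ p : ℝ, p ∈ Set.Ioc (0 : ℝ) 1 → ∃ xp : ℝ, ∀ x : ℝ,
      p * F x = F (x - xp)) :
    ∃ m : ℝ, 0 < m ∧ ∃ c : ℝ, ∀ x : ℝ, F x = Real.exp (m * (x - c)) := by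
  -- Step 1: for a ≤ 0, F (x + a) * F 0 = F a * F x for all x.
  have key0 : ∀ a : ℝ, a ≤ 0 → ∀ x : ℝ, F (x + a) * F 0 = F a * F x := by
    intro a ha x
    have hp : F a / F 0 ∈ Set.Ioc (0 : ℝ) 1 := by
      constructor
      · exact div_pos (hpos a) (hpos 0)
      · exact div_le_one_of_le₀ (hmono.monotone ha) (hpos 0).le
    obtain ⟨xp, hxp⟩ := hinv _ hp
    have h0 := hxp 0
    have : F (0 - xp) = F a := by
      rw [← h0, div_mul_cancel₀ _ (hpos 0).ne']
    have hxpa : 0 - xp = a := hmono.injective this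
    have hxa : x - xp = x + a := by linarith [hxpa]
    have hx := hxp x
    rw [hxa] at hx
    field_simp at hx
    exact ((div_eq_iff (hpos 0).ne').mp hx).symm
  -- Step 2: extend to all a.
  have key : ∀ a x : ℝ, F (x + a) * F 0 = F a * F x := by
    intro a x
    rcases le_or_gt a 0 with ha | ha
    · exact key0 a ha x
    · have h1 : F (a + -a) * F 0 = F (-a) * F a := key0 (-a) (by linarith) a
      have h2 : F ((x + a) + -a) * F 0 = F (-a) * F (x + a) := key0 (-a) (by linarith) (x + a)
      simp only [add_neg_cancel, add_neg_cancel_right] at h1 h2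
      have hFa : F (-a) ≠ 0 := (hpos _).ne'
      have hF0 : F 0 ≠ 0 := (hpos _).ne'
      have hcal : (F (x + a) * F 0) * F (-a) = (F a * F x) * F (-a) := by
        calc (F (x + a) * F 0) * F (-a) = (F (-a) * F (x + a)) * F 0 := by ring
          _ = (F x * F 0) * F 0 := by rw [← h2]
          _ = F x * (F 0 * F 0) := by ring
          _ = F x * (F (-a) * F a) := by rw [h1]
          _ = (F a * F x) * F (-a) := by ring
      exact mul_right_cancel₀ hFa hcal
  -- Step 3: build the additive map G x = log (F x) - log (F 0).
  set G : ℝ → ℝ := fun x => Real.log (F x) - Real.log (F 0) with hG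
  have hGadd : ∀ x y, G (x + y) = G x + G y := by
    intro x y
    have h := key y x
    have : Real.log (F (x + y)) + Real.log (F 0) = Real.log (F y) + Real.log (F x) := by
      rw [← Real.log_mul (hpos _).ne' (hpos _).ne', ← Real.log_mul (hpos _).ne' (hpos _).ne', h]
    simp only [hG]
    linarith [this]
  have hGcont : Continuous G := by
    exact (hcont.log (fun x => (hpos x).ne')).sub continuous_const
  -- make it an AddMonoidHom and use linearity over ℝ
  have hG0 : G 0 = 0 := by simp [hG]
  let Ghom : ℝ →+ ℝ := AddMonoidHom.mk' G (fun x y => hGadd x y)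
  have hlin : ∀ x : ℝ, G x = x * G 1 := by
    intro x
    have := map_real_smul Ghom hGcont x 1
    simpa [Ghom, smul_eq_mul] using this
  set m := G 1 with hm
  have hmpos : 0 < m := by
    have h01 : F 0 < F 1 := hmono (by norm_num)
    have : Real.log (F 0) < Real.log (F 1) := Real.log_lt_log (hpos 0) h01
    simp only [hm, hG]
    linarith
  refine ⟨m, hmpos, -(Real.log (F 0)) / m, fun x => ?_⟩
  have hFx : F x = Real.exp (G x + Real.log (F 0)) := by
    simp only [hG]
    rw [sub_add_cancel, Real.exp_log (hpos x)]
  rw [hFx, hlin x]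
  congr 1
  have hmne : m ≠ 0 := hmpos.ne'
  field_simp
  ring
end

section
/- Let ξ = (ξ₁, ξ₂, …) satisfy ξ₁ ≥ ξ₂ ≥ … ≥ 0 and ∑ₙ ξₙ ≤ 1, set ξ₀ = 1 − ∑ₙ ξₙ, and suppose ξ ∈ Δ_∞, i.e. ξ₀ > 0 or ξₙ > 0 for infinitely many n. Let p ∈ (0,1) and let (B_k)_{k≥1} be i.i.d. Bernoulli(p) random variables on a probability space. Set Z' = p·ξ₀ + ∑_k B_k ξ_k. Then Z' > 0 almost surely, E[p·ξ₀ / Z'] ≥ ξ₀, and equality holds if and only if ξ₀ = 0 or ξ₀ = 1. -/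
set_option maxHeartbeats 2000000

open MeasureTheory ProbabilityTheory Filter Set

private lemma strictConvexOn_aux (c : ℝ) (hc : 0 < c) :
    StrictConvexOn ℝ (Set.Ici (0:ℝ)) (fun x => c / (c + x)) := by
  have hcont : ContinuousOn (fun x : ℝ => c / (c + x)) (Set.Ici 0) := by
    refine ContinuousOn.div continuousOn_const (by fun_prop) ?_
    intro x hx
    have hx0 : (0:ℝ) ≤ x := hx
    positivity
  refine strictConvexOn_of_deriv2_pos (convex_Ici 0) hcont ?_
  intro x hx
  rw [interior_Ici] at hx
  have hx0 : (0:ℝ) < x := hx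
  have hd1 : ∀ y : ℝ, -c < y → HasDerivAt (fun z : ℝ => c / (c + z)) ((0 * (c + y) - c * 1) / (c + y) ^ 2) y := by
    intro y hy
    have h : HasDerivAt (fun z : ℝ => c + z) 1 y := (hasDerivAt_id y).const_add c
    exact (hasDerivAt_const y c).div h (by linarith)
  have hev : deriv (fun z : ℝ => c / (c + z)) =ᶠ[nhds x] fun y => -c / (c + y) ^ 2 := by
    filter_upwards [Ioi_mem_nhds (show -c < x by linarith)] with y hy
    rw [(hd1 y hy).deriv]
    ring
  have h : HasDerivAt (fun z : ℝ => c + z) 1 x := (hasDerivAt_id x).const_add c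
  have h2 : HasDerivAt (fun y : ℝ => -c / (c + y) ^ 2)
      ((0 * ((c+x)^2) - (-c) * ((2:ℕ) * (c+x)^1 * 1)) / ((c+x)^2)^2) x :=
    (hasDerivAt_const x (-c)).div (h.pow 2) (by positivity)
  have hit : deriv^[2] (fun z : ℝ => c / (c + z)) x
      = deriv (deriv (fun z : ℝ => c / (c + z))) x := rfl
  rw [hit, hev.deriv_eq, h2.deriv]
  have hcx : (0:ℝ) < c + x := by linarith
  have : (0 * ((c+x)^2) - (-c) * ((2:ℕ) * (c+x)^1 * 1)) / ((c+x)^2)^2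
      = 2 * c / (c + x) ^ 3 := by
    field_simp
    ring
  rw [this]
  positivity

private lemma contOn_aux (c : ℝ) (hc : 0 < c) :
    ContinuousOn (fun x : ℝ => c / (c + x)) (Set.Ici 0) := by
  refine ContinuousOn.div continuousOn_const (by fun_prop) ?_
  intro x hx
  have hx0 : (0:ℝ) ≤ x := hx
  positivity

private lemma cylinder_false {Ω : Type*} [MeasurableSpace Ω] {P : Measure Ω}
    [IsProbabilityMeasure P] (B : ℕ → Ω → Bool) (hBmeas : ∀ k, Measurable (B k))
    (hBindep : iIndepFun B P) {p : ℝ}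
    (hBlaw : ∀ k, P {ω | B k ω = true} = ENNReal.ofReal p)
    (F : Finset ℕ) :
    P (⋂ k ∈ F, {ω | B k ω = false}) = (1 - ENNReal.ofReal p) ^ F.card := by
  have hmeas_true : ∀ k, MeasurableSet {ω | B k ω = true} := fun k =>
    (hBmeas k) (measurableSet_singleton true)
  have hfalse : ∀ k, P {ω | B k ω = false} = 1 - ENNReal.ofReal p := by
    intro k
    have hset : {ω | B k ω = false} = {ω | B k ω = true}ᶜ := by
      ext ω; simp
    rw [hset, prob_compl_eq_one_sub (hmeas_true k), hBlaw k]
  have hprod := hBindep.meas_biInter (S := F) (s := fun k => {ω | B k ω = false})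
    (fun k _ => ⟨{false}, measurableSet_singleton false, rfl⟩)
  rw [hprod]
  rw [Finset.prod_congr rfl (fun k _ => hfalse k), Finset.prod_const]

private lemma ae_exists_true {Ω : Type*} [MeasurableSpace Ω] {P : Measure Ω}
    [IsProbabilityMeasure P] (B : ℕ → Ω → Bool) (hBmeas : ∀ k, Measurable (B k))
    (hBindep : iIndepFun B P) {p : ℝ} (hp0 : 0 < p)
    (hBlaw : ∀ k, P {ω | B k ω = true} = ENNReal.ofReal p)
    {I : Set ℕ} (hI : I.Infinite) :
    ∀ᵐ ω ∂P, ∃ k ∈ I, B k ω = true := by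
  rw [ae_iff]
  have hkey : ∀ n : ℕ, P {ω | ¬∃ k ∈ I, B k ω = true} ≤ (1 - ENNReal.ofReal p) ^ n := by
    intro n
    obtain ⟨F, hFsub, hFcard⟩ := hI.exists_subset_card_eq n
    rw [← hFcard, ← cylinder_false B hBmeas hBindep hBlaw F]
    refine measure_mono ?_
    intro ω hω
    simp only [Set.mem_setOf_eq, not_exists, not_and] at hω
    simp only [Set.mem_iInter, Set.mem_setOf_eq]
    intro k hk
    have := hω k (hFsub hk)
    simp only [Bool.not_eq_true] at this
    exact this
  have hq : (1 - ENNReal.ofReal p) < 1 :=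
    ENNReal.sub_lt_self ENNReal.one_ne_top one_ne_zero
      (by simpa [ENNReal.ofReal_eq_zero, not_le] using hp0)
  have htend := ENNReal.tendsto_pow_atTop_nhds_zero_of_lt_one hq
  have := ge_of_tendsto' htend hkey
  exact le_antisymm this zero_le

private lemma termMeas {Ω : Type*} [MeasurableSpace Ω] (ξ : ℕ → ℝ) (B : ℕ → Ω → Bool)
    (hBmeas : ∀ k, Measurable (B k)) (k : ℕ) :
    Measurable fun ω => if B k ω then ξ k else 0 := by
  refine Measurable.ite ?_ measurable_const measurable_const
  exact (hBmeas k) (measurableSet_singleton true)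

private lemma Xmeas {Ω : Type*} [MeasurableSpace Ω] (ξ : ℕ → ℝ) (hnonneg : ∀ n, 0 ≤ ξ n)
    (hsummable : Summable ξ) (B : ℕ → Ω → Bool) (hBmeas : ∀ k, Measurable (B k)) :
    Measurable fun ω => ∑' k, if B k ω then ξ k else 0 := by
  have hterm_sum : ∀ ω : Ω, Summable fun k => if B k ω then ξ k else 0 := fun ω => by
    refine hsummable.of_nonneg_of_le (fun k => ?_) (fun k => ?_) <;>
      · split <;> simp [hnonneg k]
  refine measurable_of_tendsto_metrizable
    (f := fun n ω => ∑ k ∈ Finset.range n, if B k ω then ξ k else 0)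
    (fun n => Finset.measurable_sum _ (fun k _ => termMeas ξ B hBmeas k)) ?_
  rw [tendsto_pi_nhds]
  intro ω
  exact (hterm_sum ω).hasSum.tendsto_sum_nat

private lemma Xexp {Ω : Type*} [MeasurableSpace Ω] {P : Measure Ω} [IsProbabilityMeasure P]
    (ξ : ℕ → ℝ) (hsummable : Summable ξ)
    (B : ℕ → Ω → Bool) (hBmeas : ∀ k, Measurable (B k)) {p : ℝ} (hp0 : 0 ≤ p)
    (hBlaw : ∀ k, P {ω | B k ω = true} = ENNReal.ofReal p) :
    ∫ ω, (∑' k, if B k ω then ξ k else 0) ∂P = p * ∑' n, ξ n := by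
  have hind : ∀ k, (fun ω => if B k ω then ξ k else 0)
      = Set.indicator {ω | B k ω = true} (fun _ => ξ k) := by
    intro k
    funext ω
    by_cases h : B k ω = true <;> simp [Set.indicator_apply, h]
  have hmeas_true : ∀ k, MeasurableSet {ω | B k ω = true} := fun k =>
    (hBmeas k) (measurableSet_singleton true)
  have hstep : ∀ k, ∫ ω, (if B k ω then ξ k else 0) ∂P = p * ξ k := by
    intro k
    rw [hind k, integral_indicator_const (ξ k) (hmeas_true k), measureReal_def, hBlaw k,
      ENNReal.toReal_ofReal hp0, smul_eq_mul]
  have hnorm : ∑' k, ∫⁻ ω, ‖if B k ω then ξ k else 0‖₊ ∂P ≠ ⊤ := by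
    have hb : ∀ k, ∫⁻ ω, ‖if B k ω then ξ k else 0‖₊ ∂P ≤ (‖ξ k‖₊ : ENNReal) := by
      intro k
      calc ∫⁻ ω, ‖if B k ω then ξ k else 0‖₊ ∂P
          ≤ ∫⁻ _, (‖ξ k‖₊ : ENNReal) ∂P := by
            refine lintegral_mono fun ω => ?_
            split <;> simp
        _ = (‖ξ k‖₊ : ENNReal) := by simp
    refine ne_top_of_le_ne_top ?_ (ENNReal.tsum_le_tsum hb)
    rw [ENNReal.tsum_coe_ne_top_iff_summable]
    rw [← NNReal.summable_coe]
    simpa [Real.norm_eq_abs] using hsummable.abs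
  rw [integral_tsum (fun k => (termMeas ξ B hBmeas k).aestronglyMeasurable) hnorm]
  rw [tsum_congr hstep, tsum_mul_left]

/-- Let `ξ ∈ Δ_∞` (a nonincreasing nonnegative sequence with sum at most `1`
which has positive dust `ξ₀ = 1 - ∑ ξₙ` or infinitely many positive entries),
let `p ∈ (0,1)` and `(B k)` be i.i.d. Bernoulli(p), and let
`Z' = p ξ₀ + ∑ₖ B_k ξ_k`.  Then `Z' > 0` a.s., `E[p ξ₀ / Z'] ≥ ξ₀`, and equality
holds iff `ξ₀ = 0` or `ξ₀ = 1`: the expected dust is non-decreasing under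
Bernoulli-`p` thinning, and constant only if the dust is `0` or `1`. -/
theorem thinning_dust_increases
    (ξ : ℕ → ℝ) (hanti : Antitone ξ) (hnonneg : ∀ n, 0 ≤ ξ n)
    (hsummable : Summable ξ) (hsum : ∑' n, ξ n ≤ 1)
    (hinf : 0 < 1 - ∑' n, ξ n ∨ {n : ℕ | 0 < ξ n}.Infinite)
    (p : ℝ) (hp : p ∈ Set.Ioo (0 : ℝ) 1)
    (Ω : Type*) [MeasurableSpace Ω] (P : Measure Ω) [IsProbabilityMeasure P]
    (B : ℕ → Ω → Bool) (hBmeas : ∀ k, Measurable (B k))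
    (hBindep : iIndepFun B P)
    (hBlaw : ∀ k, P {ω | B k ω = true} = ENNReal.ofReal p) :
    (∀ᵐ ω ∂P, 0 < p * (1 - ∑' n, ξ n) + ∑' k, (if B k ω then ξ k else 0)) ∧
    (1 - ∑' n, ξ n) ≤
      ∫ ω, (p * (1 - ∑' n, ξ n)) /
        (p * (1 - ∑' n, ξ n) + ∑' k, (if B k ω then ξ k else 0)) ∂P ∧
    ((∫ ω, (p * (1 - ∑' n, ξ n)) /
        (p * (1 - ∑' n, ξ n) + ∑' k, (if B k ω then ξ k else 0)) ∂P
      = 1 - ∑' n, ξ n) ↔ (1 - ∑' n, ξ n = 0 ∨ 1 - ∑' n, ξ n = 1)) := by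
  obtain ⟨hp0, hp1⟩ := hp
  have hterm_nonneg : ∀ (ω : Ω) (k : ℕ), 0 ≤ (if B k ω then ξ k else 0) := by
    intro ω k; split <;> simp [hnonneg k]
  have htermle : ∀ (ω : Ω) (k : ℕ), (if B k ω then ξ k else 0) ≤ ξ k := by
    intro ω k; split <;> simp [hnonneg k]
  have hterm_sum : ∀ ω : Ω, Summable fun k => if B k ω then ξ k else 0 := fun ω =>
    hsummable.of_nonneg_of_le (hterm_nonneg ω) (htermle ω)
  have hX_nonneg : ∀ ω : Ω, 0 ≤ ∑' k, (if B k ω then ξ k else 0) := fun ω =>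
    tsum_nonneg (hterm_nonneg ω)
  have hX_le : ∀ ω : Ω, (∑' k, (if B k ω then ξ k else 0)) ≤ ∑' n, ξ n := fun ω =>
    Summable.tsum_le_tsum (htermle ω) (hterm_sum ω) hsummable
  have hS_nonneg : (0:ℝ) ≤ ∑' n, ξ n := tsum_nonneg hnonneg
  have hd_nonneg : (0:ℝ) ≤ 1 - ∑' n, ξ n := by linarith
  have hXmeas : Measurable fun ω => ∑' k, if B k ω then ξ k else 0 :=
    Xmeas ξ hnonneg hsummable B hBmeas
  have hXexp : ∫ ω, (∑' k, if B k ω then ξ k else 0) ∂P = p * ∑' n, ξ n :=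
    Xexp ξ hsummable B hBmeas hp0.le hBlaw
  rcases eq_or_lt_of_le hd_nonneg with h0 | hd
  · -- dust is zero
    have hI : {n : ℕ | 0 < ξ n}.Infinite := by
      rcases hinf with h | h
      · rw [← h0] at h; exact absurd h (lt_irrefl 0)
      · exact h
    rw [← h0]
    simp only [mul_zero, zero_add, zero_div]
    refine ⟨?_, by simp, by simp⟩
    filter_upwards [ae_exists_true B hBmeas hBindep hp0 hBlaw hI] with ω hω
    obtain ⟨k, hk, hBk⟩ := hω
    have hle : ξ k ≤ ∑' j, (if B j ω then ξ j else 0) := by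
      have := Summable.le_tsum (hterm_sum ω) k (fun j _ => hterm_nonneg ω j)
      rw [hBk] at this
      simpa using this
    exact lt_of_lt_of_le hk hle
  · -- positive dust
    have hc : 0 < p * (1 - ∑' n, ξ n) := mul_pos hp0 hd
    have hXint : Integrable (fun ω => ∑' k, if B k ω then ξ k else 0) P := by
      refine (integrable_const (∑' n, ξ n)).mono' hXmeas.aestronglyMeasurable ?_
      refine ae_of_all _ fun ω => ?_
      rw [Real.norm_eq_abs, abs_of_nonneg (hX_nonneg ω)]
      exact hX_le ω
    have hgmeas : Measurable fun ω =>
        p * (1 - ∑' n, ξ n) / (p * (1 - ∑' n, ξ n) + ∑' k, (if B k ω then ξ k else 0)) :=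
      measurable_const.div (measurable_const.add hXmeas)
    have hgband : ∀ ω : Ω, ‖p * (1 - ∑' n, ξ n) /
        (p * (1 - ∑' n, ξ n) + ∑' k, (if B k ω then ξ k else 0))‖ ≤ 1 := by
      intro ω
      have hden : 0 < p * (1 - ∑' n, ξ n) + ∑' k, (if B k ω then ξ k else 0) :=
        add_pos_of_pos_of_nonneg hc (hX_nonneg ω)
      rw [Real.norm_eq_abs, abs_of_nonneg (div_nonneg hc.le hden.le)]
      rw [div_le_one hden]
      nlinarith [hX_nonneg ω]
    have hgint : Integrable (fun ω =>
        p * (1 - ∑' n, ξ n) / (p * (1 - ∑' n, ξ n) + ∑' k, (if B k ω then ξ k else 0))) P :=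
      (integrable_const (1:ℝ)).mono' hgmeas.aestronglyMeasurable (ae_of_all _ hgband)
    have hval : p * (1 - ∑' n, ξ n) / (p * (1 - ∑' n, ξ n) + p * ∑' n, ξ n)
        = 1 - ∑' n, ξ n := by
      have h1 : p * (1 - ∑' n, ξ n) + p * ∑' n, ξ n = p := by ring
      rw [h1, mul_div_cancel_left₀ _ (ne_of_gt hp0)]
    refine ⟨?_, ?_, ?_⟩
    · refine ae_of_all _ fun ω => ?_
      exact add_pos_of_pos_of_nonneg hc (hX_nonneg ω)
    · have hjensen := (strictConvexOn_aux (p * (1 - ∑' n, ξ n)) hc).convexOn.map_integral_le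
        (contOn_aux _ hc) isClosed_Ici (ae_of_all _ fun ω => hX_nonneg ω) hXint hgint
      rw [hXexp, hval] at hjensen
      exact hjensen
    · constructor
      · intro heq
        by_cases hd1 : (1 - ∑' n, ξ n) = 1
        · exact Or.inr hd1
        exfalso
        have hS_pos : 0 < ∑' n, ξ n := by
          rcases lt_or_eq_of_le hS_nonneg with h | h
          · exact h
          · exact absurd (by rw [← h]; norm_num : 1 - ∑' n, ξ n = 1) hd1
        have ha : 0 < ξ 0 := by
          by_contra h
          push_neg at h
          have hz : ∀ n, ξ n = 0 := fun n =>
            le_antisymm (le_trans (hanti (Nat.zero_le n)) h) (hnonneg n)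
          rw [tsum_congr hz, tsum_zero] at hS_pos
          exact lt_irrefl _ hS_pos
        rcases (strictConvexOn_aux (p * (1 - ∑' n, ξ n)) hc).ae_eq_const_or_map_average_lt
          (contOn_aux _ hc) isClosed_Ici (ae_of_all _ fun ω => hX_nonneg ω) hXint hgint
          with hconst | hlt
        · rw [average_eq_integral, hXexp] at hconst
          have hA : P {ω | ¬ ((∑' k, if B k ω then ξ k else 0) = p * ∑' n, ξ n)} = 0 := by
            rw [← ae_iff]; exact hconst
          set c₀ : ℝ := p * ∑' n, ξ n with hc₀
          have hAmeas : MeasurableSet {ω | (∑' k, if B k ω then ξ k else 0) = c₀} :=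
            hXmeas (measurableSet_singleton c₀)
          have hTA : P ({ω | B 0 ω = true}
              ∩ {ω | (∑' k, if B k ω then ξ k else 0) = c₀}) ≠ 0 := by
            intro hzero
            have hdiff : P ({ω | B 0 ω = true}
                \ {ω | (∑' k, if B k ω then ξ k else 0) = c₀}) = 0 :=
              measure_mono_null (fun ω hω => hω.2) hA
            have := measure_inter_add_diff {ω | B 0 ω = true} hAmeas (μ := P)
            rw [hzero, hdiff, hBlaw 0] at this
            simp only [add_zero] at this
            exact absurd this.symm (by simpa [ENNReal.ofReal_eq_zero, not_le] using hp0)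
          obtain ⟨ω₀, hω₀T, hω₀A⟩ := nonempty_of_measure_ne_zero hTA
          have hge : ξ 0 ≤ c₀ := by
            have h0 : (if B 0 ω₀ then ξ 0 else 0) ≤ ∑' k, (if B k ω₀ then ξ k else 0) :=
              Summable.le_tsum (hterm_sum ω₀) 0 (fun j _ => hterm_nonneg ω₀ j)
            rw [Set.mem_setOf_eq] at hω₀T hω₀A
            rw [hω₀T] at h0
            simp only [if_true] at h0
            rw [hω₀A] at h0
            exact h0
          obtain ⟨N, hN⟩ : ∃ N, (∑' k, ξ (k + N)) < ξ 0 :=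
            ((tendsto_sum_nat_add ξ).eventually (gt_mem_nhds ha)).exists
          have hCne : P (⋂ k ∈ Finset.range N, {ω | B k ω = false}) ≠ 0 := by
            rw [cylinder_false B hBmeas hBindep hBlaw]
            apply pow_ne_zero
            rw [Ne, tsub_eq_zero_iff_le, not_le]
            exact ENNReal.ofReal_lt_one.mpr hp1
          have hCA : P ((⋂ k ∈ Finset.range N, {ω | B k ω = false})
              ∩ {ω | (∑' k, if B k ω then ξ k else 0) = c₀}) ≠ 0 := by
            intro hzero
            have hdiff : P ((⋂ k ∈ Finset.range N, {ω | B k ω = false})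
                \ {ω | (∑' k, if B k ω then ξ k else 0) = c₀}) = 0 :=
              measure_mono_null (fun ω hω => hω.2) hA
            have := measure_inter_add_diff
              (⋂ k ∈ Finset.range N, {ω | B k ω = false}) hAmeas (μ := P)
            rw [hzero, hdiff, add_zero] at this
            exact hCne this.symm
          obtain ⟨ω₁, hω₁C, hω₁A⟩ := nonempty_of_measure_ne_zero hCA
          rw [Set.mem_setOf_eq] at hω₁A
          have hfalse : ∀ k < N, B k ω₁ = false := by
            intro k hk
            have h1 := Set.mem_iInter.mp hω₁C k
            exact Set.mem_iInter.mp h1 (Finset.mem_range.mpr hk)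
          have hsplit := Summable.sum_add_tsum_nat_add (f := fun k => if B k ω₁ then ξ k else 0) N
            (hterm_sum ω₁)
          have hzero : ∑ k ∈ Finset.range N, (if B k ω₁ then ξ k else 0) = 0 := by
            refine Finset.sum_eq_zero fun k hk => ?_
            rw [hfalse k (Finset.mem_range.mp hk)]
            simp
          rw [hzero, zero_add, hω₁A] at hsplit
          have htail_le : c₀ ≤ ∑' k, ξ (k + N) := by
            rw [← hsplit]
            refine Summable.tsum_le_tsum (fun k => htermle ω₁ (k + N)) ?_ ?_
            · exact (summable_nat_add_iff N).mpr (hterm_sum ω₁)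
            · exact (summable_nat_add_iff N).mpr hsummable
          linarith
        · rw [average_eq_integral, average_eq_integral, hXexp] at hlt
          rw [hval, heq] at hlt
          exact lt_irrefl _ hlt
      · intro h
        rcases h with h0' | h1
        · exact absurd h0'.symm (ne_of_lt hd)
        · have hSz : ∑' n, ξ n = 0 := by linarith
          have hxz : ∀ n, ξ n = 0 := fun n =>
            le_antisymm (by
              have := Summable.le_tsum hsummable n (fun j _ => hnonneg j)
              rw [hSz] at this
              exact this) (hnonneg n)
          have hXz : ∀ ω : Ω, (∑' k, (if B k ω then ξ k else 0)) = 0 := by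
            intro ω
            have : ∀ k, (if B k ω then ξ k else 0) = 0 := fun k => by
              rw [hxz k]; simp
            rw [tsum_congr this, tsum_zero]
          rw [h1]
          simp only [hXz, mul_one, add_zero]
          rw [div_self (ne_of_gt hp0), integral_const]
          simp
end

section
/- Let p ∈ (0,1). Let ξ = (ξ₁, ξ₂, …) be a random element of Δ_∞ and let (B_k)_{k≥1} be i.i.d. Bernoulli(p) random variables independent of ξ, all on a common probability space. Set ξ₀ = 1 − ∑ₙ ξₙ and Z' = p·ξ₀ + ∑_k B_k ξ_k, let K₁ < K₂ < … be the (almost surely well-defined) increasing enumeration of {k : B_k = 1}, and set ζₙ = ξ_{Kₙ}/Z' for n ≥ 1. If the law of ζ = (ζ₁, ζ₂, …) as a random element of [0,1]^ℕ equals the law of ξ, then ξ₀ ∈ {0,1} almost surely. -/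
open MeasureTheory ProbabilityTheory Filter



lemma dust_key {p d w : ℝ} (hp : 0 < p) (hd : 0 ≤ d) (hw : 0 ≤ w) :
    d + (d / p) * (p * (1 - d) - w) ≤ 1 - w / (p * d + w) ∧
    (1 - w / (p * d + w) = d + (d / p) * (p * (1 - d) - w) → 0 < d → w = p * (1 - d)) := by
  rcases eq_or_lt_of_le (by positivity : (0:ℝ) ≤ p * d + w) with hZ | hZ
  · have hd0 : d = 0 := by nlinarith
    constructor
    · have hw0 : w = 0 := by nlinarith
      subst hd0; subst hw0; simp
    · intro _ hdpos; rw [hd0] at hdpos; exact absurd hdpos (lt_irrefl 0)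
  · have hne : p * d + w ≠ 0 := ne_of_gt hZ
    have hpne : p ≠ 0 := ne_of_gt hp
    have hkey : 1 - w / (p * d + w) - (d + (d / p) * (p * (1 - d) - w))
        = d * (p - (p * d + w))^2 / (p * (p * d + w)) := by
      field_simp
      ring
    have hnn : 0 ≤ d * (p - (p * d + w))^2 / (p * (p * d + w)) := by positivity
    constructor
    · linarith [hkey ▸ hnn]
    · intro heq hdpos
      have h0 : d * (p - (p * d + w))^2 / (p * (p * d + w)) = 0 := by
        rw [← hkey]; linarith
      have hden : p * (p * d + w) ≠ 0 := by positivity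
      have h1 : d * (p - (p * d + w))^2 = 0 := by
        rw [div_eq_zero_iff] at h0; exact h0.resolve_right hden
      rcases mul_eq_zero.mp h1 with h | h
      · exact absurd h (ne_of_gt hdpos)
      · have : p = p * d + w := by nlinarith [sq_nonneg (p - (p*d+w))]
        nlinarith


lemma measurable_apply_comp {α : Type*} [MeasurableSpace α] {f : α → ℕ → ℝ}
    {N : α → ℕ} (hf : Measurable f) (hN : Measurable N) :
    Measurable fun a => f a (N a) := by
  intro s hs
  have h : (fun a => f a (N a)) ⁻¹' s = ⋃ m, (N ⁻¹' {m}) ∩ ((fun a => f a m) ⁻¹' s) := by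
    ext a
    simp only [Set.mem_preimage, Set.mem_iUnion, Set.mem_inter_iff, Set.mem_singleton_iff]
    exact ⟨fun h => ⟨N a, rfl, h⟩, fun ⟨m, hm, h⟩ => hm ▸ h⟩
  rw [h]
  exact MeasurableSet.iUnion fun m =>
    (hN (measurableSet_singleton m)).inter (((measurable_pi_apply m).comp hf) hs)

lemma measurable_sInf_set {α : Type*} [MeasurableSpace α] {q : ℕ → α → Prop}
    (hq : ∀ m, MeasurableSet {a | q m a}) :
    Measurable fun a => sInf {m | q m a} := by
  apply measurable_to_countable'
  intro j
  have h : (fun a => sInf {m | q m a}) ⁻¹' {j} =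
      ({a | q j a} ∩ ⋂ i, ⋂ (_ : i < j), {a | q i a}ᶜ) ∪
      ({a | j = 0} ∩ ⋂ i, {a | q i a}ᶜ) := by
    ext a
    simp only [Set.mem_preimage, Set.mem_singleton_iff, Set.mem_union, Set.mem_inter_iff,
      Set.mem_iInter, Set.mem_compl_iff, Set.mem_setOf_eq]
    constructor
    · intro h
      rcases Set.eq_empty_or_nonempty {m | q m a} with he | hne
      · right
        refine ⟨by rw [← h, he, Nat.sInf_empty], fun i hi => ?_⟩
        exact absurd hi (by rw [Set.eq_empty_iff_forall_notMem] at he; exact he i)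
      · left
        refine ⟨h ▸ Nat.sInf_mem hne, fun i hi hqi => ?_⟩
        have := Nat.sInf_le (show i ∈ {m | q m a} from hqi)
        omega
    · rintro (⟨hj, hlt⟩ | ⟨hj0, hall⟩)
      · refine le_antisymm (Nat.sInf_le hj) (le_of_not_gt fun hc => ?_)
        exact hlt _ hc (Nat.sInf_mem (⟨j, hj⟩ : Set.Nonempty {m | q m a}))
      · have : {m | q m a} = ∅ := Set.eq_empty_iff_forall_notMem.mpr hall
        rw [this, Nat.sInf_empty, hj0]
  rw [h]
  exact ((hq j).inter (MeasurableSet.iInter fun i => MeasurableSet.iInter fun _ =>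
      (hq i).compl)).union ((MeasurableSet.const _).inter
      (MeasurableSet.iInter fun i => (hq i).compl))


lemma nth_eq_sInf {p : ℕ → Prop} [DecidablePred p] (hp : (setOf p).Infinite) (n : ℕ) :
    Nat.nth p n = sInf {m | p m ∧ Nat.count p m = n} := by
  have hset : {m | p m ∧ Nat.count p m = n} = {Nat.nth p n} := by
    ext m
    simp only [Set.mem_setOf_eq, Set.mem_singleton_iff]
    constructor
    · rintro ⟨hm, hc⟩
      rw [← hc]
      exact (Nat.nth_count hm).symm
    · rintro rfl
      exact ⟨Nat.nth_mem_of_infinite hp n, Nat.count_nth_of_infinite hp n⟩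
  rw [hset, csInf_singleton]

lemma measurable_count {α : Type*} [MeasurableSpace α] (B : ℕ → α → Bool)
    (hB : ∀ k, Measurable (B k)) (m : ℕ) :
    Measurable fun a => Nat.count (fun k => B k a = true) m := by
  induction m with
  | zero => simp only [Nat.count_zero]; exact measurable_const
  | succ n ih =>
    have h : (fun a => Nat.count (fun k => B k a = true) (n + 1)) =
        fun a => Nat.count (fun k => B k a = true) n + (if B n a = true then 1 else 0) := by
      funext a; rw [Nat.count_succ]
    rw [h]
    exact ih.add (Measurable.ite ((hB n) (measurableSet_singleton true))
      measurable_const measurable_const)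


lemma tsum_nth_eq {p : ℕ → Prop} [DecidablePred p] (hp : (setOf p).Infinite) (f : ℕ → ℝ) :
    ∑' n, f (Nat.nth p n) = ∑' k, if p k then f k else 0 := by
  have h1 : ∑' n, (setOf p).indicator f (Nat.nth p n) = ∑' k, (setOf p).indicator f k :=
    Function.Injective.tsum_eq (Nat.nth_injective hp)
      (by rw [Nat.range_nth_of_infinite hp]; exact Set.support_indicator_subset)
  have h2 : ∀ n, (setOf p).indicator f (Nat.nth p n) = f (Nat.nth p n) := fun n =>
    Set.indicator_of_mem (Nat.nth_mem_of_infinite hp n) f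
  have h3 : ∀ k, (setOf p).indicator f k = if p k then f k else 0 := fun k => by
    by_cases h : p k
    · rw [Set.indicator_of_mem (s := setOf p) h, if_pos h]
    · rw [Set.indicator_of_notMem (s := setOf p) h, if_neg h]
  rw [← tsum_congr h2, h1, tsum_congr h3]

lemma ae_infinite_of_bernoulli {Ω : Type*} [MeasurableSpace Ω] (P : Measure Ω)
    [IsProbabilityMeasure P] (p : ℝ) (hp : 0 < p) (B : ℕ → Ω → Bool)
    (hBmeas : ∀ k, Measurable (B k))
    (hBindep : iIndepFun B P)
    (hBlaw : ∀ k, P {ω | B k ω = true} = ENNReal.ofReal p) :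
    ∀ᵐ ω ∂P, {k | B k ω = true}.Infinite := by
  set s : ℕ → Set Ω := fun k => {ω | B k ω = true} with hs
  have hsm : ∀ k, MeasurableSet (s k) := fun k => (hBmeas k) (measurableSet_singleton true)
  have hindep : iIndepSet s P := by
    rw [iIndepSet_iff_meas_biInter hsm]
    intro S
    exact hBindep.meas_biInter fun i _ => ⟨{true}, trivial, rfl⟩
  have hsum : (∑' k, P (s k)) = ⊤ := by
    rw [tsum_congr (fun k => hBlaw k)]
    exact ENNReal.tsum_const_eq_top_of_ne_zero
      (by simpa using (ENNReal.ofReal_pos.mpr hp).ne')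
  have hlim := measure_limsup_eq_one hsm hindep hsum
  have hms : MeasurableSet (limsup s atTop) := by
    rw [limsup_eq_iInf_iSup_of_nat]
    exact MeasurableSet.iInter fun n => MeasurableSet.iUnion fun i =>
      MeasurableSet.iUnion fun _ => hsm i
  have hcompl : P (limsup s atTop)ᶜ = 0 := (prob_compl_eq_zero_iff hms).mpr hlim
  rw [ae_iff]
  refine measure_mono_null (fun ω hω => ?_) hcompl
  simp only [Set.mem_compl_iff] at *
  intro hmem
  apply hω
  rw [limsup_eq_iInf_iSup_of_nat] at hmem
  simp only [Set.iInf_eq_iInter, Set.iSup_eq_iUnion, Set.mem_iInter, Set.mem_iUnion] at hmem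
  apply Set.infinite_of_not_bddAbove
  rintro ⟨b, hb⟩
  obtain ⟨j, hj, hjmem⟩ := hmem (b + 1)
  have := hb (Set.mem_setOf_eq ▸ hjmem : j ∈ {k | B k ω = true})
  omega

set_option maxHeartbeats 2000000 in
/-- A thinning invariant random partition structure has an amount of dust in
`{0,1}` almost surely: if `ξ` is a random element of `Δ_∞`, `(B k)` are i.i.d.
Bernoulli(`p`) independent of `ξ`, `Z' = p ξ₀ + ∑ₖ B_k ξ_k`, `K₀ < K₁ < …`
enumerates `{k : B_k = 1}` and `ζ n = ξ_{K n} / Z'`, and if `ζ` has the same law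
as `ξ`, then `ξ₀ = 1 - ∑ₙ ξₙ ∈ {0,1}` almost surely. -/
theorem thinning_invariant_dust_zero_or_one
    (p : ℝ) (hp : p ∈ Set.Ioo (0 : ℝ) 1)
    (Ω : Type*) [MeasurableSpace Ω] (P : Measure Ω) [IsProbabilityMeasure P]
    (ξ : Ω → ℕ → ℝ) (hξmeas : Measurable ξ)
    (hξΔ : ∀ᵐ ω ∂P, Antitone (ξ ω) ∧ (∀ n, 0 ≤ ξ ω n) ∧ Summable (ξ ω) ∧
      (∑' n, ξ ω n) ≤ 1 ∧
      (0 < 1 - ∑' n, ξ ω n ∨ {n : ℕ | 0 < ξ ω n}.Infinite))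
    (B : ℕ → Ω → Bool) (hBmeas : ∀ k, Measurable (B k))
    (hBindep : iIndepFun B P)
    (hBlaw : ∀ k, P {ω | B k ω = true} = ENNReal.ofReal p)
    (hIndep : IndepFun ξ (fun ω k => B k ω) P)
    (hlaw :
      Measure.map
        (fun ω n => ξ ω (Nat.nth (fun k => B k ω = true) n) /
          (p * (1 - ∑' n, ξ ω n) + ∑' k, (if B k ω then ξ ω k else 0))) P
      = Measure.map ξ P) :
    ∀ᵐ ω ∂P, (1 - ∑' n, ξ ω n = 0) ∨ (1 - ∑' n, ξ ω n = 1) := by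
  obtain ⟨hp0, hp1⟩ := hp
  have hBvec : Measurable fun ω k => B k ω := measurable_pi_lambda _ fun k => hBmeas k
  have hξk : ∀ k, Measurable fun ω => ξ ω k := fun k => (measurable_pi_apply k).comp hξmeas
  have hInfB := ae_infinite_of_bernoulli P p hp0 B hBmeas hBindep hBlaw
  -- measurable surrogates
  set mS : Ω → ℝ := fun ω => (∑' n, ENNReal.ofReal (ξ ω n)).toReal with hmS_def
  set mW : Ω → ℝ := fun ω => (∑' k, ENNReal.ofReal (if B k ω then ξ ω k else 0)).toReal with hmW_def
  set mT : Ω → ℝ := fun ω => (∑' k, ENNReal.ofReal (ξ ω k ^ 2)).toReal with hmT_def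
  have hmSm : Measurable mS :=
    (Measurable.ennreal_tsum fun n => (hξk n).ennreal_ofReal).ennreal_toReal
  have hWtm : ∀ k, Measurable fun ω => if B k ω then ξ ω k else 0 := fun k =>
    Measurable.ite ((hBmeas k) (measurableSet_singleton true)) (hξk k) measurable_const
  have hmWm : Measurable mW :=
    (Measurable.ennreal_tsum fun k => (hWtm k).ennreal_ofReal).ennreal_toReal
  have hmTm : Measurable mT :=
    (Measurable.ennreal_tsum fun k => ((hξk k).pow_const 2).ennreal_ofReal).ennreal_toReal
  set mD : Ω → ℝ := fun ω => 1 - mS ω with hmD_def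
  have hmDm : Measurable mD := measurable_const.sub hmSm
  set mZ : Ω → ℝ := fun ω => p * mD ω + mW ω with hmZ_def
  have hmZm : Measurable mZ := (measurable_const.mul hmDm).add hmWm
  set χ : ℕ → Ω → ℝ := fun k ω => if B k ω then (1:ℝ) else 0 with hχ_def
  have hχm : ∀ k, Measurable (χ k) := fun k =>
    Measurable.ite ((hBmeas k) (measurableSet_singleton true)) measurable_const measurable_const
  -- basic a.e. facts
  have hA : ∀ᵐ ω ∂P, (∀ n, 0 ≤ ξ ω n) ∧ Summable (ξ ω) ∧ (∑' n, ξ ω n) ≤ 1 ∧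
      {k | B k ω = true}.Infinite := by
    filter_upwards [hξΔ, hInfB] with ω h1 h2
    exact ⟨h1.2.1, h1.2.2.1, h1.2.2.2.1, h2⟩
  have hGood : ∀ᵐ ω ∂P,
      mS ω = ∑' n, ξ ω n ∧
      mW ω = ∑' k, (if B k ω then ξ ω k else 0) ∧
      mT ω = ∑' k, ξ ω k ^ 2 ∧
      (∀ n, 0 ≤ ξ ω n) ∧ Summable (ξ ω) ∧ (∑' n, ξ ω n) ≤ 1 ∧
      {k | B k ω = true}.Infinite ∧
      Summable (fun k => if B k ω then ξ ω k else 0) ∧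
      Summable (fun k => ξ ω k ^ 2) := by
    filter_upwards [hA] with ω hω
    obtain ⟨hnn, hsum, hle, hinf⟩ := hω
    have hξ1 : ∀ k, ξ ω k ≤ 1 := fun k => le_trans (Summable.le_tsum hsum k fun j _ => hnn j) hle
    have hWnn : ∀ k, 0 ≤ (if B k ω then ξ ω k else 0) := fun k => by
      by_cases h : B k ω = true <;> simp [h, hnn k]
    have hWle : ∀ k, (if B k ω then ξ ω k else 0) ≤ ξ ω k := fun k => by
      by_cases h : B k ω = true <;> simp [h, hnn k]
    have hWsum : Summable (fun k => if B k ω then ξ ω k else 0) :=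
      Summable.of_nonneg_of_le hWnn hWle hsum
    have hTle : ∀ k, ξ ω k ^ 2 ≤ ξ ω k := fun k => by nlinarith [hnn k, hξ1 k]
    have hTsum : Summable (fun k => ξ ω k ^ 2) :=
      Summable.of_nonneg_of_le (fun k => sq_nonneg _) hTle hsum
    refine ⟨?_, ?_, ?_, hnn, hsum, hle, hinf, hWsum, hTsum⟩
    · show (∑' n, ENNReal.ofReal (ξ ω n)).toReal = _
      rw [← ENNReal.ofReal_tsum_of_nonneg hnn hsum,
        ENNReal.toReal_ofReal (tsum_nonneg hnn)]
    · show (∑' k, ENNReal.ofReal (if B k ω then ξ ω k else 0)).toReal = _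
      rw [← ENNReal.ofReal_tsum_of_nonneg hWnn hWsum,
        ENNReal.toReal_ofReal (tsum_nonneg hWnn)]
    · show (∑' k, ENNReal.ofReal (ξ ω k ^ 2)).toReal = _
      rw [← ENNReal.ofReal_tsum_of_nonneg (fun k => sq_nonneg _) hTsum,
        ENNReal.toReal_ofReal (tsum_nonneg fun k => sq_nonneg _)]
  have hB0 : ∀ᵐ ω ∂P, 0 ≤ mS ω ∧ mS ω ≤ 1 ∧ 0 ≤ mW ω ∧ mW ω ≤ mS ω ∧ 0 ≤ mD ω ∧ mD ω ≤ 1 ∧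
      0 ≤ mT ω ∧ mT ω ≤ 1 ∧ mW ω ≤ mZ ω ∧ 0 ≤ mZ ω ∧ (∀ k, 0 ≤ ξ ω k ∧ ξ ω k ≤ 1) := by
    filter_upwards [hGood] with ω hω
    obtain ⟨hS, hW, hT, hnn, hsum, hle, hinf, hWsum, hTsum⟩ := hω
    have hξ1 : ∀ k, ξ ω k ≤ 1 := fun k => le_trans (Summable.le_tsum hsum k fun j _ => hnn j) hle
    have hWnn : ∀ k, 0 ≤ (if B k ω then ξ ω k else 0) := fun k => by
      by_cases h : B k ω = true <;> simp [h, hnn k]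
    have hWle : ∀ k, (if B k ω then ξ ω k else 0) ≤ ξ ω k := fun k => by
      by_cases h : B k ω = true <;> simp [h, hnn k]
    have hTle : ∀ k, ξ ω k ^ 2 ≤ ξ ω k := fun k => by nlinarith [hnn k, hξ1 k]
    have h1 : 0 ≤ mS ω := hS ▸ tsum_nonneg hnn
    have h2 : mS ω ≤ 1 := hS ▸ hle
    have h3 : 0 ≤ mW ω := hW ▸ tsum_nonneg hWnn
    have h4 : mW ω ≤ mS ω := by rw [hS, hW]; exact Summable.tsum_le_tsum hWle hWsum hsum
    have h5 : 0 ≤ mD ω := by show (0:ℝ) ≤ 1 - mS ω; linarith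
    have h6 : mD ω ≤ 1 := by show (1:ℝ) - mS ω ≤ 1; linarith
    have h7 : 0 ≤ mT ω := hT ▸ tsum_nonneg fun k => sq_nonneg _
    have h8 : mT ω ≤ 1 := by
      rw [hT]
      calc ∑' k, ξ ω k ^ 2 ≤ ∑' k, ξ ω k := Summable.tsum_le_tsum hTle hTsum hsum
      _ ≤ 1 := hle
    have h9 : mW ω ≤ mZ ω := by show mW ω ≤ p * mD ω + mW ω; nlinarith
    have h10 : 0 ≤ mZ ω := by show (0:ℝ) ≤ p * mD ω + mW ω; nlinarith
    exact ⟨h1, h2, h3, h4, h5, h6, h7, h8, h9, h10, fun k => ⟨hnn k, hξ1 k⟩⟩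
  -- the thinned sequence and its measurable surrogate
  set ζf : Ω → ℕ → ℝ := fun ω n => ξ ω (Nat.nth (fun k => B k ω = true) n) /
      (p * (1 - ∑' n, ξ ω n) + ∑' k, (if B k ω then ξ ω k else 0)) with hζf_def
  set N : ℕ → Ω → ℕ := fun n ω =>
      sInf {m | B m ω = true ∧ Nat.count (fun k => B k ω = true) m = n} with hN_def
  have hmN : ∀ n, Measurable (N n) := by
    intro n
    apply measurable_sInf_set
    intro m
    exact (((hBmeas m) (measurableSet_singleton true)).inter
      ((measurable_count B hBmeas m) (measurableSet_singleton n)))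
  set mζ : Ω → ℕ → ℝ := fun ω n => ξ ω (N n ω) / mZ ω with hmζ_def
  have hmζm : Measurable mζ := measurable_pi_lambda _ fun n =>
    (measurable_apply_comp hξmeas (hmN n)).div hmZm
  have hZeq : ∀ᵐ ω ∂P,
      (p * (1 - ∑' n, ξ ω n) + ∑' k, (if B k ω then ξ ω k else 0)) = mZ ω := by
    filter_upwards [hGood] with ω hω
    obtain ⟨hS, hW, hT, hnn, hsum, hle, hinf, hWsum, hTsum⟩ := hω
    show _ = p * mD ω + mW ω
    show _ = p * (1 - mS ω) + mW ω
    rw [hS, hW]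
  have hζeq : ∀ᵐ ω ∂P, ζf ω = mζ ω := by
    filter_upwards [hGood, hZeq] with ω hω hZ
    obtain ⟨hS, hW, hT, hnn, hsum, hle, hinf, hWsum, hTsum⟩ := hω
    funext n
    show ξ ω (Nat.nth (fun k => B k ω = true) n) /
        (p * (1 - ∑' n, ξ ω n) + ∑' k, (if B k ω then ξ ω k else 0)) = ξ ω (N n ω) / mZ ω
    rw [hZ]
    congr 2
    show Nat.nth (fun k => B k ω = true) n =
      sInf {m | B m ω = true ∧ Nat.count (fun k => B k ω = true) m = n}
    exact nth_eq_sInf hinf n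
  have haeζ : AEMeasurable ζf P := ⟨mζ, hmζm, hζeq⟩
  set g' : (ℕ → ℝ) → ℝ := fun x => 1 - (∑' n, ENNReal.ofReal (x n)).toReal with hg'_def
  have hg'm : Measurable g' := measurable_const.sub
    ((Measurable.ennreal_tsum fun n => (measurable_pi_apply n).ennreal_ofReal).ennreal_toReal)
  have hsumζ : ∀ᵐ ω ∂P, g' (ζf ω) = 1 - mW ω / mZ ω := by
    filter_upwards [hGood, hB0, hZeq] with ω hω hb hZ
    obtain ⟨hS, hW, hT, hnn, hsum, hle, hinf, hWsum, hTsum⟩ := hω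
    obtain ⟨hS0, hS1, hW0, hWS, hD0, hD1, hT0, hT1, hWZ, hZ0, hk01⟩ := hb
    have hζn : ∀ n, ζf ω n = ξ ω (Nat.nth (fun k => B k ω = true) n) / mZ ω := fun n => by
      show ξ ω (Nat.nth (fun k => B k ω = true) n) /
        (p * (1 - ∑' n, ξ ω n) + ∑' k, (if B k ω then ξ ω k else 0)) = _
      rw [hZ]
    rcases eq_or_lt_of_le hZ0 with hz | hz
    · have hzz : ∀ n, ζf ω n = 0 := fun n => by rw [hζn n, ← hz, div_zero]
      show 1 - (∑' n, ENNReal.ofReal (ζf ω n)).toReal = _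
      have : (fun n => ENNReal.ofReal (ζf ω n)) = fun _ => 0 := by
        funext n; rw [hzz n]; simp
      rw [this, tsum_zero, ← hz, div_zero]
      simp
    · have hnth : ∑' n, ξ ω (Nat.nth (fun k => B k ω = true) n) = mW ω := by
        rw [tsum_nth_eq hinf (ξ ω), hW]
      have hζnn : ∀ n, 0 ≤ ζf ω n := fun n => by
        rw [hζn n]; exact div_nonneg (hnn _) hZ0
      have hζsum : Summable (ζf ω) := by
        have h1 : Summable (fun n => ξ ω (Nat.nth (fun k => B k ω = true) n)) :=
          hsum.comp_injective (Nat.nth_injective hinf)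
        exact (h1.div_const (mZ ω)).congr fun n => (hζn n).symm
      have htζ : ∑' n, ζf ω n = mW ω / mZ ω := by
        rw [tsum_congr hζn, tsum_div_const, hnth]
      show 1 - (∑' n, ENNReal.ofReal (ζf ω n)).toReal = _
      rw [← ENNReal.ofReal_tsum_of_nonneg hζnn hζsum,
        ENNReal.toReal_ofReal (tsum_nonneg hζnn), htζ]
  have hE1 : ∫ ω, (1 - mW ω / mZ ω) ∂P = ∫ ω, mD ω ∂P := by
    have h1 : ∫ ω, (1 - mW ω / mZ ω) ∂P = ∫ ω, g' (ζf ω) ∂P :=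
      integral_congr_ae (hsumζ.mono fun ω h => h.symm)
    have h2 : ∫ ω, g' (ζf ω) ∂P = ∫ x, g' x ∂(Measure.map ζf P) :=
      (integral_map haeζ hg'm.aestronglyMeasurable).symm
    have h3 : ∫ x, g' x ∂(Measure.map ζf P) = ∫ x, g' x ∂(Measure.map ξ P) := by rw [hlaw]
    have h4 : ∫ x, g' x ∂(Measure.map ξ P) = ∫ ω, g' (ξ ω) ∂P :=
      integral_map hξmeas.aemeasurable hg'm.aestronglyMeasurable
    have h5 : ∫ ω, g' (ξ ω) ∂P = ∫ ω, mD ω ∂P := rfl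
    rw [h1, h2, h3, h4, h5]
  -- integrability helper
  have intb : ∀ (f : Ω → ℝ) (C : ℝ), AEStronglyMeasurable f P → (∀ᵐ ω ∂P, |f ω| ≤ C) →
      Integrable f P := fun f C hm hb =>
    Integrable.mono' (integrable_const C) hm (by simpa [Real.norm_eq_abs] using hb)
  -- independence workhorse
  have hprod : ∀ (φ : (ℕ → ℝ) → ℝ) (ψ : (ℕ → Bool) → ℝ), Measurable φ → Measurable ψ →
      ∫ ω, φ (ξ ω) * ψ (fun k => B k ω) ∂P
        = (∫ ω, φ (ξ ω) ∂P) * ∫ ω, ψ (fun k => B k ω) ∂P := fun φ ψ hφ hψ =>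
    (hIndep.comp hφ hψ).integral_fun_mul_eq_mul_integral (hφ.comp hξmeas).aestronglyMeasurable
      (hψ.comp hBvec).aestronglyMeasurable
  -- Bernoulli moment computations
  have hχb1 : ∀ k ω, |χ k ω| ≤ 1 := by
    intro k ω
    show |if B k ω then (1:ℝ) else 0| ≤ 1
    by_cases h : B k ω = true <;> simp [h]
  have hχpb : ∀ k ω, |χ k ω - p| ≤ 1 := by
    intro k ω
    show |(if B k ω then (1:ℝ) else 0) - p| ≤ 1
    rw [abs_le]
    by_cases h : B k ω = true <;> simp [h] <;> constructor <;> linarith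
  have hχint : ∀ k, Integrable (χ k) P := fun k =>
    intb _ 1 (hχm k).aestronglyMeasurable (Eventually.of_forall (hχb1 k))
  have hχmean : ∀ k, ∫ ω, χ k ω ∂P = p := by
    intro k
    have hset : MeasurableSet {ω | B k ω = true} := (hBmeas k) (measurableSet_singleton true)
    have h1 : χ k = Set.indicator {ω | B k ω = true} (fun _ => (1:ℝ)) := by
      funext ω
      show (if B k ω then (1:ℝ) else 0) = _
      by_cases h : B k ω = true <;> simp [Set.indicator_apply, h]
    rw [h1, integral_indicator_const (1:ℝ) hset, measureReal_def, hBlaw k, smul_eq_mul, mul_one,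
      ENNReal.toReal_ofReal hp0.le]
  have hχpmean : ∀ k, ∫ ω, (χ k ω - p) ∂P = 0 := by
    intro k
    rw [integral_sub (hχint k) (integrable_const p), hχmean k, integral_const]
    simp
  have hχsqmean : ∀ k, ∫ ω, (χ k ω - p) ^ 2 ∂P = p - p ^ 2 := by
    intro k
    have h1 : (fun ω => (χ k ω - p) ^ 2) = fun ω => (1 - 2 * p) * χ k ω + p ^ 2 := by
      funext ω
      show ((if B k ω then (1:ℝ) else 0) - p) ^ 2 = (1 - 2*p) * (if B k ω then (1:ℝ) else 0) + p ^ 2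
      by_cases h : B k ω = true <;> simp [h] <;> ring
    rw [h1, integral_add ((hχint k).const_mul _) (integrable_const _), integral_const_mul,
      hχmean k, integral_const]
    simp
    ring
  have hχχmean : ∀ j k, j ≠ k → ∫ ω, (χ j ω - p) * (χ k ω - p) ∂P = 0 := by
    intro j k hjk
    have mb : Measurable fun t : Bool => (if t then (1:ℝ) else 0) - p := measurable_from_top
    have hind : IndepFun (fun ω => χ j ω - p) (fun ω => χ k ω - p) P :=
      (hBindep.indepFun hjk).comp mb mb
    rw [hind.integral_fun_mul_eq_mul_integral ((hχm j).sub measurable_const).aestronglyMeasurable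
      ((hχm k).sub measurable_const).aestronglyMeasurable, hχpmean j, hχpmean k, mul_zero]
  -- E2 : ∫ mD (mW - p mS) = 0
  have hDkint : ∀ k, Integrable (fun ω => mD ω * ξ ω k) P := by
    intro k
    refine intb _ 1 (hmDm.mul (hξk k)).aestronglyMeasurable ?_
    filter_upwards [hB0] with ω hb
    obtain ⟨hS0, hS1, hW0, hWS, hD0, hD1, hT0, hT1, hWZ, hZ0, hk01⟩ := hb
    obtain ⟨hk0, hk1⟩ := hk01 k
    rw [abs_mul, abs_of_nonneg hD0, abs_of_nonneg hk0]
    nlinarith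
  have hterm1 : ∀ k, ∫ ω, (mD ω * ξ ω k) * (χ k ω - p) ∂P = 0 := by
    intro k
    have hφ : Measurable (fun x : ℕ → ℝ => (1 - (∑' n, ENNReal.ofReal (x n)).toReal) * x k) :=
      (measurable_const.sub ((Measurable.ennreal_tsum fun n =>
        (measurable_pi_apply n).ennreal_ofReal).ennreal_toReal)).mul (measurable_pi_apply k)
    have hψ : Measurable (fun b : ℕ → Bool => (if b k then (1:ℝ) else 0) - p) :=
      ((measurable_from_top (f := fun t : Bool => if t then (1:ℝ) else 0)).comp
        (measurable_pi_apply k)).sub measurable_const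
    have h := hprod _ _ hφ hψ
    have h2 : ∫ ω, (fun b : ℕ → Bool => (if b k then (1:ℝ) else 0) - p) (fun j => B j ω) ∂P = 0 :=
      hχpmean k
    exact h.trans (by rw [h2, mul_zero])
  set U : ℕ → Ω → ℝ := fun n ω => ∑ k ∈ Finset.range n, (χ k ω - p) * ξ ω k with hU_def
  have hUm : ∀ n, Measurable (U n) := fun n =>
    Finset.measurable_sum _ fun k _ => ((hχm k).sub measurable_const).mul (hξk k)
  have hUb : ∀ᵐ ω ∂P, ∀ n, |U n ω| ≤ 1 := by
    filter_upwards [hGood] with ω hω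
    obtain ⟨hS, hW, hT, hnn, hsum, hle, hinf, hWsum, hTsum⟩ := hω
    intro n
    have h1 : |U n ω| ≤ ∑ k ∈ Finset.range n, |(χ k ω - p) * ξ ω k| := by
      show |∑ k ∈ Finset.range n, (χ k ω - p) * ξ ω k| ≤ _
      exact Finset.abs_sum_le_sum_abs _ _
    have h2 : ∀ k, |(χ k ω - p) * ξ ω k| ≤ ξ ω k := fun k => by
      rw [abs_mul, abs_of_nonneg (hnn k)]
      nlinarith [hχpb k ω, abs_nonneg (χ k ω - p), hnn k]
    calc |U n ω| ≤ ∑ k ∈ Finset.range n, |(χ k ω - p) * ξ ω k| := h1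
      _ ≤ ∑ k ∈ Finset.range n, ξ ω k := Finset.sum_le_sum fun k _ => h2 k
      _ ≤ ∑' k, ξ ω k := Summable.sum_le_tsum _ (fun k _ => hnn k) hsum
      _ ≤ 1 := hle
  have hUn0 : ∀ n, ∫ ω, mD ω * U n ω ∂P = 0 := by
    intro n
    have h1 : (fun ω => mD ω * U n ω)
        = fun ω => ∑ k ∈ Finset.range n, (mD ω * ξ ω k) * (χ k ω - p) := by
      funext ω
      show mD ω * (∑ k ∈ Finset.range n, (χ k ω - p) * ξ ω k) = _
      rw [Finset.mul_sum]
      exact Finset.sum_congr rfl fun k _ => by ring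
    have hint : ∀ k ∈ Finset.range n, Integrable (fun ω => (mD ω * ξ ω k) * (χ k ω - p)) P := by
      intro k _
      refine intb _ 1 ((hmDm.mul (hξk k)).mul ((hχm k).sub measurable_const)).aestronglyMeasurable ?_
      filter_upwards [hB0] with ω hb
      obtain ⟨hS0, hS1, hW0, hWS, hD0, hD1, hT0, hT1, hWZ, hZ0, hk01⟩ := hb
      obtain ⟨hk0, hk1⟩ := hk01 k
      rw [abs_mul, abs_mul, abs_of_nonneg hD0, abs_of_nonneg hk0]
      have h4 : mD ω * ξ ω k ≤ 1 := by nlinarith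
      exact mul_le_one₀ h4 (abs_nonneg _) (hχpb k ω)
    rw [h1, integral_finset_sum _ hint]
    simp [hterm1]
  have hconv1 : ∀ᵐ ω ∂P, Tendsto (fun n => U n ω) atTop (nhds (mW ω - p * mS ω)) := by
    filter_upwards [hGood] with ω hω
    obtain ⟨hS, hW, hT, hnn, hsum, hle, hinf, hWsum, hTsum⟩ := hω
    have hc : ∀ k, (χ k ω - p) * ξ ω k = (if B k ω then ξ ω k else 0) - p * ξ ω k := fun k => by
      show ((if B k ω then (1:ℝ) else 0) - p) * ξ ω k = _
      by_cases h : B k ω = true <;> simp [h] <;> ring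
    have hsum2 : Summable fun k => (χ k ω - p) * ξ ω k :=
      ((hWsum.sub (hsum.mul_left p)).congr fun k => (hc k).symm)
    have hval : ∑' k, (χ k ω - p) * ξ ω k = mW ω - p * mS ω := by
      rw [tsum_congr hc, Summable.tsum_sub hWsum (hsum.mul_left p), tsum_mul_left, hW, hS]
    have := hsum2.hasSum.tendsto_sum_nat
    rw [hval] at this
    exact this
  have hE2 : ∫ ω, mD ω * (mW ω - p * mS ω) ∂P = 0 := by
    have hDCT := tendsto_integral_of_dominated_convergence (F := fun n ω => mD ω * U n ω)
      (f := fun ω => mD ω * (mW ω - p * mS ω)) (fun _ => (1:ℝ))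
      (fun n => (hmDm.mul (hUm n)).aestronglyMeasurable) (integrable_const 1)
      (fun n => by
        filter_upwards [hUb, hB0] with ω hU hb
        obtain ⟨hS0, hS1, hW0, hWS, hD0, hD1, hT0, hT1, hWZ, hZ0, hk01⟩ := hb
        rw [Real.norm_eq_abs, abs_mul, abs_of_nonneg hD0]
        nlinarith [hU n, abs_nonneg (U n ω)])
      (by filter_upwards [hconv1, hB0] with ω hc hb
          exact hc.const_mul (mD ω))
    have h2 : Tendsto (fun n => ∫ ω, mD ω * U n ω ∂P) atTop (nhds 0) := by
      simp only [hUn0]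
      exact tendsto_const_nhds
    exact tendsto_nhds_unique hDCT h2
  -- the gap function is nonnegative with zero integral
  have hD'int : Integrable (fun ω => 1 - mW ω / mZ ω) P := by
    refine intb _ 1 (measurable_const.sub (hmWm.div hmZm)).aestronglyMeasurable ?_
    filter_upwards [hB0] with ω hb
    obtain ⟨hS0, hS1, hW0, hWS, hD0, hD1, hT0, hT1, hWZ, hZ0, hk01⟩ := hb
    rcases eq_or_lt_of_le hZ0 with hz | hz
    · rw [← hz, div_zero]; simp
    · have h1 : 0 ≤ mW ω / mZ ω := div_nonneg hW0 hZ0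
      have h2 : mW ω / mZ ω ≤ 1 := (div_le_one hz).mpr hWZ
      rw [abs_le]; constructor <;> linarith
  have hDint : Integrable mD P := intb _ 1 hmDm.aestronglyMeasurable (by
    filter_upwards [hB0] with ω hb
    obtain ⟨hS0, hS1, hW0, hWS, hD0, hD1, _⟩ := hb
    rw [abs_le]; constructor <;> linarith)
  have hDWSint : Integrable (fun ω => mD ω * (p * mS ω - mW ω)) P := by
    refine intb _ 2 (hmDm.mul ((measurable_const.mul hmSm).sub hmWm)).aestronglyMeasurable ?_
    filter_upwards [hB0] with ω hb
    obtain ⟨hS0, hS1, hW0, hWS, hD0, hD1, hT0, hT1, hWZ, hZ0, hk01⟩ := hb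
    rw [abs_mul, abs_of_nonneg hD0]
    have hpS1 : p * mS ω ≤ 1 := mul_le_one₀ hp1.le hS0 hS1
    have hpS0 : 0 ≤ p * mS ω := mul_nonneg hp0.le hS0
    have h3 : |p * mS ω - mW ω| ≤ 2 := by rw [abs_le]; constructor <;> linarith
    calc mD ω * |p * mS ω - mW ω| ≤ 1 * 2 := mul_le_mul hD1 h3 (abs_nonneg _) zero_le_one
      _ = 2 := one_mul 2
  have hXint : Integrable (fun ω => (mD ω / p) * (p * mS ω - mW ω)) P := by
    have h1 : (fun ω => (mD ω / p) * (p * mS ω - mW ω))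
        = fun ω => p⁻¹ * (mD ω * (p * mS ω - mW ω)) := by
      funext ω; rw [div_eq_mul_inv]; ring
    rw [h1]; exact hDWSint.const_mul p⁻¹
  have hGint : Integrable
      (fun ω => (1 - mW ω / mZ ω) - (mD ω + (mD ω / p) * (p * mS ω - mW ω))) P :=
    hD'int.sub (hDint.add hXint)
  have hGnn : ∀ᵐ ω ∂P, 0 ≤ (1 - mW ω / mZ ω) - (mD ω + (mD ω / p) * (p * mS ω - mW ω)) := by
    filter_upwards [hB0] with ω hb
    obtain ⟨hS0, hS1, hW0, hWS, hD0, hD1, hT0, hT1, hWZ, hZ0, hk01⟩ := hb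
    have h := (dust_key hp0 hD0 hW0).1
    have h1 : p * (1 - mD ω) = p * mS ω := by show p * (1 - (1 - mS ω)) = _; ring
    have h2 : p * mD ω + mW ω = mZ ω := rfl
    rw [h1, h2] at h
    linarith
  have hGzero_int : ∫ ω, ((1 - mW ω / mZ ω) - (mD ω + (mD ω / p) * (p * mS ω - mW ω))) ∂P = 0 := by
    have h1 : ∫ ω, (mD ω / p) * (p * mS ω - mW ω) ∂P = 0 := by
      have heq : (fun ω => (mD ω / p) * (p * mS ω - mW ω))
          = fun ω => -p⁻¹ * (mD ω * (mW ω - p * mS ω)) := by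
        funext ω; rw [div_eq_mul_inv]; ring
      rw [heq, integral_const_mul, hE2, mul_zero]
    have e1 : ∫ ω, ((1 - mW ω / mZ ω) - (mD ω + (mD ω / p) * (p * mS ω - mW ω))) ∂P
        = (∫ ω, (1 - mW ω / mZ ω) ∂P)
          - ∫ ω, (mD ω + (mD ω / p) * (p * mS ω - mW ω)) ∂P :=
      integral_sub hD'int (hDint.add hXint)
    have e2 : ∫ ω, (mD ω + (mD ω / p) * (p * mS ω - mW ω)) ∂P
        = (∫ ω, mD ω ∂P) + ∫ ω, (mD ω / p) * (p * mS ω - mW ω) ∂P :=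
      integral_add hDint hXint
    rw [e1, e2, h1, hE1]
    ring
  have hGzero : ∀ᵐ ω ∂P,
      (1 - mW ω / mZ ω) - (mD ω + (mD ω / p) * (p * mS ω - mW ω)) = 0 := by
    have h := (integral_eq_zero_iff_of_nonneg_ae hGnn hGint).mp hGzero_int
    filter_upwards [h] with ω hω
    exact hω
  have hWpS : ∀ᵐ ω ∂P, 0 < mD ω → mW ω = p * mS ω := by
    filter_upwards [hGzero, hB0] with ω h0 hb
    obtain ⟨hS0, hS1, hW0, hWS, hD0, hD1, hT0, hT1, hWZ, hZ0, hk01⟩ := hb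
    intro hDpos
    have h1 : p * (1 - mD ω) = p * mS ω := by show p * (1 - (1 - mS ω)) = _; ring
    have heq : 1 - mW ω / (p * mD ω + mW ω) = mD ω + (mD ω / p) * (p * (1 - mD ω) - mW ω) := by
      rw [h1]
      have h2 : p * mD ω + mW ω = mZ ω := rfl
      rw [h2]; linarith
    have h3 := (dust_key hp0 hD0 hW0).2 heq hDpos
    rw [h1] at h3
    exact h3
  -- second moment computations
  have hDjkint : ∀ j k, Integrable
      (fun ω => (mD ω * (ξ ω j * ξ ω k)) * ((χ j ω - p) * (χ k ω - p))) P := by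
    intro j k
    refine intb _ 1 ((hmDm.mul ((hξk j).mul (hξk k))).mul
      (((hχm j).sub measurable_const).mul ((hχm k).sub measurable_const))).aestronglyMeasurable ?_
    filter_upwards [hB0] with ω hb
    obtain ⟨hS0, hS1, hW0, hWS, hD0, hD1, hT0, hT1, hWZ, hZ0, hk01⟩ := hb
    obtain ⟨hj0, hj1⟩ := hk01 j
    obtain ⟨hk0, hk1⟩ := hk01 k
    rw [abs_mul]
    have a1 : |mD ω * (ξ ω j * ξ ω k)| ≤ 1 := by
      rw [abs_of_nonneg (mul_nonneg hD0 (mul_nonneg hj0 hk0))]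
      exact mul_le_one₀ hD1 (mul_nonneg hj0 hk0) (mul_le_one₀ hj1 hk0 hk1)
    have a2 : |(χ j ω - p) * (χ k ω - p)| ≤ 1 := by
      rw [abs_mul]
      exact mul_le_one₀ (hχpb j ω) (abs_nonneg _) (hχpb k ω)
    exact mul_le_one₀ a1 (abs_nonneg _) a2
  have hDsqint : ∀ j, Integrable (fun ω => mD ω * ξ ω j ^ 2) P := by
    intro j
    refine intb _ 1 (hmDm.mul ((hξk j).pow_const 2)).aestronglyMeasurable ?_
    filter_upwards [hB0] with ω hb
    obtain ⟨hS0, hS1, hW0, hWS, hD0, hD1, hT0, hT1, hWZ, hZ0, hk01⟩ := hb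
    obtain ⟨hj0, hj1⟩ := hk01 j
    rw [abs_mul, abs_of_nonneg hD0, abs_of_nonneg (sq_nonneg _)]
    have : ξ ω j ^ 2 ≤ 1 := by nlinarith
    exact mul_le_one₀ hD1 (sq_nonneg _) this
  have hterm2 : ∀ j k, ∫ ω, (mD ω * (ξ ω j * ξ ω k)) * ((χ j ω - p) * (χ k ω - p)) ∂P
      = if j = k then (p - p ^ 2) * ∫ ω, mD ω * (ξ ω j * ξ ω k) ∂P else 0 := by
    intro j k
    have hφ : Measurable (fun x : ℕ → ℝ =>
        (1 - (∑' n, ENNReal.ofReal (x n)).toReal) * (x j * x k)) :=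
      (measurable_const.sub ((Measurable.ennreal_tsum fun n =>
        (measurable_pi_apply n).ennreal_ofReal).ennreal_toReal)).mul
        ((measurable_pi_apply j).mul (measurable_pi_apply k))
    have hψ : Measurable (fun b : ℕ → Bool =>
        ((if b j then (1:ℝ) else 0) - p) * ((if b k then (1:ℝ) else 0) - p)) :=
      (((measurable_from_top (f := fun t : Bool => if t then (1:ℝ) else 0)).comp
        (measurable_pi_apply j)).sub measurable_const).mul
        (((measurable_from_top (f := fun t : Bool => if t then (1:ℝ) else 0)).comp
        (measurable_pi_apply k)).sub measurable_const)
    have h := hprod _ _ hφ hψ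
    by_cases hjk : j = k
    · subst hjk
      rw [if_pos rfl]
      have h2 : ∫ ω, (χ j ω - p) * (χ j ω - p) ∂P = p - p ^ 2 := by
        have e : (fun ω => (χ j ω - p) * (χ j ω - p)) = fun ω => (χ j ω - p) ^ 2 := by
          funext ω; ring
        rw [e, hχsqmean j]
      calc ∫ ω, (mD ω * (ξ ω j * ξ ω j)) * ((χ j ω - p) * (χ j ω - p)) ∂P
          = (∫ ω, mD ω * (ξ ω j * ξ ω j) ∂P) * ∫ ω, (χ j ω - p) * (χ j ω - p) ∂P := h
        _ = (∫ ω, mD ω * (ξ ω j * ξ ω j) ∂P) * (p - p ^ 2) := by rw [h2]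
        _ = (p - p ^ 2) * ∫ ω, mD ω * (ξ ω j * ξ ω j) ∂P := mul_comm _ _
    · rw [if_neg hjk]
      calc ∫ ω, (mD ω * (ξ ω j * ξ ω k)) * ((χ j ω - p) * (χ k ω - p)) ∂P
          = (∫ ω, mD ω * (ξ ω j * ξ ω k) ∂P) * ∫ ω, (χ j ω - p) * (χ k ω - p) ∂P := h
        _ = 0 := by rw [hχχmean j k hjk, mul_zero]
  have hQn : ∀ n, ∫ ω, mD ω * (U n ω) ^ 2 ∂P
      = (p - p ^ 2) * ∫ ω, mD ω * (∑ k ∈ Finset.range n, ξ ω k ^ 2) ∂P := by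
    intro n
    have hexp : (fun ω => mD ω * (U n ω) ^ 2)
        = fun ω => ∑ j ∈ Finset.range n, ∑ k ∈ Finset.range n,
            (mD ω * (ξ ω j * ξ ω k)) * ((χ j ω - p) * (χ k ω - p)) := by
      funext ω
      show mD ω * (∑ k ∈ Finset.range n, (χ k ω - p) * ξ ω k) ^ 2 = _
      rw [sq, Finset.sum_mul_sum, Finset.mul_sum]
      refine Finset.sum_congr rfl fun j _ => ?_
      rw [Finset.mul_sum]
      refine Finset.sum_congr rfl fun k _ => ?_
      ring
    rw [hexp, integral_finset_sum _ fun j _ => integrable_finset_sum _ fun k _ => hDjkint j k]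
    have hin : ∀ j ∈ Finset.range n,
        ∫ ω, ∑ k ∈ Finset.range n, (mD ω * (ξ ω j * ξ ω k)) * ((χ j ω - p) * (χ k ω - p)) ∂P
          = (p - p ^ 2) * ∫ ω, mD ω * ξ ω j ^ 2 ∂P := by
      intro j hj
      rw [integral_finset_sum _ fun k _ => hDjkint j k,
        Finset.sum_congr rfl (fun k _ => hterm2 j k), Finset.sum_ite_eq, if_pos hj,
        show (fun ω => mD ω * (ξ ω j * ξ ω j)) = fun ω => mD ω * ξ ω j ^ 2 from
          funext fun ω => by ring]
    rw [Finset.sum_congr rfl hin, ← Finset.mul_sum]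
    congr 1
    rw [← integral_finset_sum _ fun j _ => hDsqint j]
    congr 1
    funext ω
    rw [Finset.mul_sum]
  have hE3 : ∫ ω, mD ω * (mW ω - p * mS ω) ^ 2 ∂P = 0 := by
    have hz : (fun ω => mD ω * (mW ω - p * mS ω) ^ 2) =ᵐ[P] fun _ => 0 := by
      filter_upwards [hWpS, hB0] with ω h1 hb
      obtain ⟨hS0, hS1, hW0, hWS, hD0, hD1, hT0, hT1, hWZ, hZ0, hk01⟩ := hb
      rcases eq_or_lt_of_le hD0 with h | h
      · show mD ω * _ = 0
        rw [← h, zero_mul]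
      · show mD ω * _ = 0
        rw [h1 h]
        ring
    rw [integral_congr_ae hz]
    simp
  have hDCT2 : Tendsto (fun n => ∫ ω, mD ω * (U n ω) ^ 2 ∂P) atTop (nhds 0) := by
    have h := tendsto_integral_of_dominated_convergence (F := fun n ω => mD ω * (U n ω) ^ 2)
      (f := fun ω => mD ω * (mW ω - p * mS ω) ^ 2) (fun _ => (1:ℝ))
      (fun n => (hmDm.mul ((hUm n).pow_const 2)).aestronglyMeasurable) (integrable_const 1)
      (fun n => by
        filter_upwards [hUb, hB0] with ω hU hb
        obtain ⟨hS0, hS1, hW0, hWS, hD0, hD1, _⟩ := hb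
        rw [Real.norm_eq_abs, abs_mul, abs_of_nonneg hD0]
        have e1 : |(U n ω) ^ 2| ≤ 1 := by
          rw [abs_of_nonneg (sq_nonneg _)]
          nlinarith [hU n, abs_nonneg (U n ω), sq_abs (U n ω)]
        exact mul_le_one₀ hD1 (abs_nonneg _) e1)
      (by
        filter_upwards [hconv1] with ω hc
        exact (hc.pow 2).const_mul (mD ω))
    rw [hE3] at h
    exact h
  have hsqconv : ∀ᵐ ω ∂P, Tendsto (fun n => mD ω * ∑ k ∈ Finset.range n, ξ ω k ^ 2) atTop
      (nhds (mD ω * mT ω)) := by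
    filter_upwards [hGood] with ω hω
    obtain ⟨hS, hW, hT, hnn, hsum, hle, hinf, hWsum, hTsum⟩ := hω
    have h := hTsum.hasSum.tendsto_sum_nat
    rw [← hT] at h
    exact h.const_mul (mD ω)
  have hDCT3 : Tendsto (fun n => ∫ ω, mD ω * (∑ k ∈ Finset.range n, ξ ω k ^ 2) ∂P) atTop
      (nhds (∫ ω, mD ω * mT ω ∂P)) := by
    refine tendsto_integral_of_dominated_convergence (fun _ => (1:ℝ))
      (fun n => (hmDm.mul
        (Finset.measurable_sum _ fun k _ => (hξk k).pow_const 2)).aestronglyMeasurable)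
      (integrable_const 1) (fun n => ?_) hsqconv
    filter_upwards [hGood, hB0] with ω hω hb
    obtain ⟨hS, hW, hT, hnn, hsum, hle, hinf, hWsum, hTsum⟩ := hω
    obtain ⟨hS0, hS1, hW0, hWS, hD0, hD1, _⟩ := hb
    rw [Real.norm_eq_abs, abs_mul, abs_of_nonneg hD0]
    have e0 : 0 ≤ ∑ k ∈ Finset.range n, ξ ω k ^ 2 := Finset.sum_nonneg fun k _ => sq_nonneg _
    have hξ1 : ∀ k, ξ ω k ≤ 1 := fun k => le_trans (Summable.le_tsum hsum k fun j _ => hnn j) hle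
    have e1 : ∑ k ∈ Finset.range n, ξ ω k ^ 2 ≤ 1 := by
      calc ∑ k ∈ Finset.range n, ξ ω k ^ 2 ≤ ∑' k, ξ ω k ^ 2 :=
            Summable.sum_le_tsum _ (fun k _ => sq_nonneg _) hTsum
        _ ≤ ∑' k, ξ ω k := Summable.tsum_le_tsum (fun k => by nlinarith [hnn k, hξ1 k]) hTsum hsum
        _ ≤ 1 := hle
    rw [abs_of_nonneg e0]
    exact mul_le_one₀ hD1 e0 e1
  have hDT : ∫ ω, mD ω * mT ω ∂P = 0 := by
    have h2 : Tendsto (fun n => ∫ ω, mD ω * (U n ω) ^ 2 ∂P) atTop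
        (nhds ((p - p ^ 2) * ∫ ω, mD ω * mT ω ∂P)) := by
      have h3 := hDCT3.const_mul (p - p ^ 2)
      exact h3.congr fun n => (hQn n).symm
    have h3 := tendsto_nhds_unique h2 hDCT2
    have hpp : p - p ^ 2 ≠ 0 := by
      have : 0 < p - p ^ 2 := by nlinarith
      exact this.ne'
    exact (mul_eq_zero.mp h3).resolve_left hpp
  have hDTz : ∀ᵐ ω ∂P, mD ω * mT ω = 0 := by
    have hint : Integrable (fun ω => mD ω * mT ω) P := by
      refine intb _ 1 (hmDm.mul hmTm).aestronglyMeasurable ?_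
      filter_upwards [hB0] with ω hb
      obtain ⟨hS0, hS1, hW0, hWS, hD0, hD1, hT0, hT1, _⟩ := hb
      rw [abs_mul, abs_of_nonneg hD0, abs_of_nonneg hT0]
      exact mul_le_one₀ hD1 hT0 hT1
    have hnn2 : 0 ≤ᵐ[P] fun ω => mD ω * mT ω := by
      filter_upwards [hB0] with ω hb
      obtain ⟨hS0, hS1, hW0, hWS, hD0, hD1, hT0, _⟩ := hb
      exact mul_nonneg hD0 hT0
    have h := (integral_eq_zero_iff_of_nonneg_ae hnn2 hint).mp hDT
    filter_upwards [h] with ω hω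
    exact hω
  -- conclusion
  filter_upwards [hDTz, hGood] with ω hDT0 hω
  obtain ⟨hS, hW, hT, hnn, hsum, hle, hinf, hWsum, hTsum⟩ := hω
  rcases mul_eq_zero.mp hDT0 with h | h
  · left
    have h2 : 1 - mS ω = 0 := h
    rw [hS] at h2
    exact h2
  · right
    have hTz : ∑' k, ξ ω k ^ 2 = 0 := by rw [← hT]; exact h
    have hz : ∀ k, ξ ω k = 0 := by
      intro k
      have h1 : ξ ω k ^ 2 ≤ 0 := hTz ▸ Summable.le_tsum hTsum k fun j _ => sq_nonneg _
      have h2 : ξ ω k ^ 2 = 0 := le_antisymm h1 (sq_nonneg _)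
      exact (pow_eq_zero_iff two_ne_zero).mp h2
    have h3 : ∑' n, ξ ω n = 0 := by
      rw [tsum_congr hz]
      exact tsum_zero
    rw [h3, sub_zero]
end
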